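/- If a sequence (v_n) with v_n → ∞ satisfies v_{n+1} = v_n + c·v_n^{1-α} for constants c > 0 and α > 1 (with v_0 > 0), then v_n/n^{1/α} → (cα)^{1/α} as n → ∞. -/

import Mathlib

open Filter Real Topology

/-- If `(v_n)` with `v_n → ∞` satisfies `v_{n+1} = v_n + c v_n^{1-α}` with `c > 0`,
`α > 1`, `v_0 > 0`, then `v_n / n^{1/α} → (c α)^{1/α}`. -/
theorem stmt_16 (c α : ℝ) (hc : 0 < c) (hα : 1 < α) (v : ℕ → ℝ) (hv0 : 0 < v 0)
    (hv : Tendsto v atTop atTop)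
    (hrec : ∀ n, v (n + 1) = v n + c * (v n) ^ (1 - α)) :
    Tendsto (fun n : ℕ => v n / (n : ℝ) ^ (1 / α)) atTop (nhds ((c * α) ^ (1 / α))) := by
  have hα0 : (0:ℝ) < α := lt_trans one_pos hα
  have hαne : α ≠ 0 := ne_of_gt hα0
  have hpos : ∀ n, 0 < v n := by
    intro n; induction n with
    | zero => exact hv0
    | succ n ih =>
      rw [hrec]
      have := Real.rpow_pos_of_pos ih (1 - α)
      positivity
  set t : ℕ → ℝ := fun n => c * (v n) ^ (-α) with ht
  have htpos : ∀ n, 0 < t n := fun n => mul_pos hc (Real.rpow_pos_of_pos (hpos n) _)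
  have ht0 : Tendsto t atTop (𝓝 0) := by
    have h := ((tendsto_rpow_neg_atTop hα0).comp hv).const_mul c
    simpa using h
  -- v (n+1) = v n * (1 + t n)
  have hstep : ∀ n, v (n + 1) = v n * (1 + t n) := by
    intro n
    rw [hrec, mul_add, mul_one, ht]
    have : v n * (c * v n ^ (-α)) = c * v n ^ (1 - α) := by
      rw [sub_eq_add_neg, Real.rpow_add (hpos n), Real.rpow_one]
      ring
    rw [this]
  -- v n ^ α * t n = c
  have hvt : ∀ n, v n ^ α * t n = c := by
    intro n
    rw [ht]
    have : v n ^ α * (c * v n ^ (-α)) = c * (v n ^ α * v n ^ (-α)) := by ring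
    rw [this, ← Real.rpow_add (hpos n)]
    simp
  have hd_eq : ∀ n, v (n + 1) ^ α - v n ^ α = c * (((1 + t n) ^ α - 1) / t n) := by
    intro n
    have h1t : (0:ℝ) < 1 + t n := by have := htpos n; linarith
    rw [hstep n, Real.mul_rpow (hpos n).le h1t.le]
    have htne : t n ≠ 0 := (htpos n).ne'
    have hv' : v n ^ α = c / t n := (eq_div_iff htne).mpr (hvt n)
    rw [hv']
    field_simp
  -- derivative of (1+s)^α at 0 is α
  have hderiv : HasDerivAt (fun s : ℝ => (1 + s) ^ α) α 0 := by
    have h1 : HasDerivAt (fun x : ℝ => x ^ α) (α * (1:ℝ) ^ (α - 1)) 1 :=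
      Real.hasDerivAt_rpow_const (Or.inl one_ne_zero)
    have h1' : HasDerivAt (fun x : ℝ => x ^ α) (α * (1:ℝ) ^ (α - 1)) (1 + 0) := by
      simpa using h1
    have h2 : HasDerivAt (fun s : ℝ => 1 + s) 1 0 := (hasDerivAt_id 0).const_add 1
    have h3 := h1'.comp 0 h2
    have h4 : HasDerivAt (fun s : ℝ => (1 + s) ^ α) (α * (1:ℝ) ^ (α - 1) * 1) 0 := h3
    simpa using h4
  have hslope := hasDerivAt_iff_tendsto_slope.mp hderiv
  have htne : Tendsto t atTop (𝓝[≠] (0:ℝ)) :=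
    tendsto_nhdsWithin_of_tendsto_nhds_of_eventually_within _ ht0
      (Eventually.of_forall fun n => (htpos n).ne')
  have hd_lim : Tendsto (fun n => v (n + 1) ^ α - v n ^ α) atTop (𝓝 (c * α)) := by
    have h := (hslope.comp htne).const_mul c
    refine h.congr fun n => ?_
    rw [hd_eq n]
    simp [Function.comp, slope_def_field, Real.one_rpow]
  have hces := hd_lim.cesaro
  have hmain : Tendsto (fun n : ℕ => v n ^ α / n) atTop (𝓝 (c * α)) := by
    have h0 : Tendsto (fun n : ℕ => v 0 ^ α / n) atTop (𝓝 0) :=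
      tendsto_const_div_atTop_nhds_zero_nat _
    have h := h0.add hces
    rw [zero_add] at h
    refine h.congr fun n => ?_
    rw [Finset.sum_range_sub (fun i => v i ^ α) n]
    rcases Nat.eq_zero_or_pos n with h | h
    · simp [h]
    · have hn : (n:ℝ) ≠ 0 := Nat.cast_ne_zero.mpr h.ne'
      field_simp
      ring
  have hfin := hmain.rpow_const (p := 1 / α) (Or.inr (by positivity))
  refine hfin.congr' ?_
  filter_upwards [eventually_gt_atTop 0] with n hn
  have hn0 : (0:ℝ) < n := Nat.cast_pos.mpr hn
  rw [Real.div_rpow (Real.rpow_nonneg (hpos n).le _) hn0.le,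
    ← Real.rpow_mul (hpos n).le, mul_one_div_cancel hαne, Real.rpow_one]
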